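/- Let N and N' be tier-1 binary phylogenetic networks on the same leaf set that have a common embedded tree T. Then there is a finite sequence of valid head moves transforming N into N'. -/

import Mathlib

noncomputable section

namespace Phylo

/-- In-degree of a vertex in a digraph given by an edge relation. -/
def indeg {V : Type} (E : V → V → Prop) (v : V) : ℕ := Nat.card {u // E u v}

/-- Out-degree of a vertex in a digraph given by an edge relation. -/
def outdeg {V : Type} (E : V → V → Prop) (v : V) : ℕ := Nat.card {w // E v w}

def IsRoot {V : Type} (E : V → V → Prop) (v : V) : Prop := indeg E v = 0 ∧ outdeg E v = 1
def IsLeafNode {V : Type} (E : V → V → Prop) (v : V) : Prop := indeg E v = 1 ∧ outdeg E v = 0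
def IsSplit {V : Type} (E : V → V → Prop) (v : V) : Prop := indeg E v = 1 ∧ outdeg E v = 2
def IsRetic {V : Type} (E : V → V → Prop) (v : V) : Prop := indeg E v = 2 ∧ outdeg E v = 1

/-- A directed graph is acyclic if no vertex lies on a directed cycle. -/
def Acyclic {V : Type} (E : V → V → Prop) : Prop := ∀ v, ¬ Relation.TransGen E v v

/-- `(V, E)` together with the leaf-labelling `lab : X → V` is a binary phylogenetic
network on leaf set `X`: an acyclic digraph with a unique root (indeg 0, outdeg 1),
leaves (indeg 1, outdeg 0) bijectively labelled by `X`, and all other nodes split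
nodes (indeg 1, outdeg 2) or reticulations (indeg 2, outdeg 1). -/
structure IsPhyloNet {V X : Type} [Fintype V] (E : V → V → Prop) (lab : X → V) : Prop where
  acyclic : Acyclic E
  root_unique : ∃! v, IsRoot E v
  lab_inj : Function.Injective lab
  leaf_iff : ∀ v, IsLeafNode E v ↔ v ∈ Set.range lab
  node_types : ∀ v, IsRoot E v ∨ IsLeafNode E v ∨ IsSplit E v ∨ IsRetic E v

/-- The reticulation number of a digraph. -/
def reticCount {V : Type} (E : V → V → Prop) : ℕ := Nat.card {v // IsRetic E v}

/-- Labelled isomorphism of leaf-labelled digraphs. -/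
def LabIso {V V' X : Type} (E : V → V → Prop) (lab : X → V)
    (E' : V' → V' → Prop) (lab' : X → V') : Prop :=
  ∃ φ : V ≃ V', (∀ a b, E a b ↔ E' (φ a) (φ b)) ∧ ∀ x, φ (lab x) = lab' x

/-- Result of the head move of the edge `(u,v)` to the edge `(s,t)`, where `p` is the
other parent of the reticulation `v` and `c` its child.  The former head `v` is reused
as the node `v'` subdividing `(s,t)`: we delete `(u,v), (p,v), (v,c), (s,t)`, add
`(p,c)` (suppressing `v`), `(s,v), (v,t)` (subdividing `(s,t)` by `v' = v`), and the
new edge `(u,v') = (u,v)`. -/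
def headMoveEdges {V : Type} (E : V → V → Prop) (u v p c s t : V) : V → V → Prop :=
  fun a b =>
    (E a b ∧ (a, b) ≠ (p, v) ∧ (a, b) ≠ (v, c) ∧ (a, b) ≠ (s, t) ∧ (a, b) ≠ (u, v))
      ∨ (a, b) = (p, c) ∨ (a, b) = (s, v) ∨ (a, b) = (v, t) ∨ (a, b) = (u, v)

/-- Result of the tail move of the edge `(u,v)` to the edge `(s,t)`, where `p` is the
parent of the split node `u` and `c` its other child; `u` is reused as the node `u'`
subdividing `(s,t)`. -/
def tailMoveEdges {V : Type} (E : V → V → Prop) (u v p c s t : V) : V → V → Prop :=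
  fun a b =>
    (E a b ∧ (a, b) ≠ (p, u) ∧ (a, b) ≠ (u, c) ∧ (a, b) ≠ (s, t) ∧ (a, b) ≠ (u, v))
      ∨ (a, b) = (p, c) ∨ (a, b) = (s, u) ∨ (a, b) = (u, t) ∨ (a, b) = (u, v)

/-- A leaf-labelled digraph on a finite vertex set, the carrier for phylogenetic
networks on leaf set `X`. -/
structure Net (X : Type) where
  V : Type
  fin : Fintype V
  E : V → V → Prop
  lab : X → V

attribute [instance] Net.fin

/-- `N` is a binary phylogenetic network. -/
def Net.valid {X : Type} (N : Net X) : Prop := IsPhyloNet N.E N.lab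

/-- Labelled isomorphism of two leaf-labelled digraphs. -/
def NetIso {X : Type} (N N' : Net X) : Prop := LabIso N.E N.lab N'.E N'.lab

/-- `N'` is obtained from `N` by one valid head move. -/
def HeadMoveStep {X : Type} (N N' : Net X) : Prop :=
  N.valid ∧ N'.valid ∧ ∃ u v p c s t : N.V,
    N.E u v ∧ N.E p v ∧ p ≠ u ∧ N.E v c ∧ N.E s t ∧
    LabIso (headMoveEdges N.E u v p c s t) N.lab N'.E N'.lab

/-- `N'` is obtained from `N` by one valid tail move. -/
def TailMoveStep {X : Type} (N N' : Net X) : Prop :=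
  N.valid ∧ N'.valid ∧ ∃ u v p c s t : N.V,
    N.E u v ∧ N.E p u ∧ N.E u c ∧ c ≠ v ∧ N.E s t ∧
    LabIso (tailMoveEdges N.E u v p c s t) N.lab N'.E N'.lab

/-- The digraph obtained by subdividing the edge `(s,t)` with a fresh node (`none`). -/
def subdivEdge {V : Type} (E : V → V → Prop) (s t : V) : Option V → Option V → Prop
  | some a, some b => E a b ∧ (a, b) ≠ (s, t)
  | some a, none => a = s
  | none, some b => b = t
  | none, none => False

/-- `N'` is obtained from `N` by one valid distance-`d` head move: after subdividing
the target edge `(s,t)` with a new node `v'`, a shortest path from the old head `v`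
to `v'` in the underlying undirected graph has length at most `d + 1`. -/
def HeadMoveStepD {X : Type} (d : ℕ) (N N' : Net X) : Prop :=
  N.valid ∧ N'.valid ∧ ∃ u v p c s t : N.V,
    N.E u v ∧ N.E p v ∧ p ≠ u ∧ N.E v c ∧ N.E s t ∧
    (SimpleGraph.fromRel (subdivEdge N.E s t)).dist (some v) none ≤ d + 1 ∧
    LabIso (headMoveEdges N.E u v p c s t) N.lab N'.E N'.lab

/-- `N` and `N'` are connected by a finite sequence of `R`-moves (up to labelled
isomorphism, i.e. renaming of vertices). -/
def ConnectedBy {X : Type} (R : Net X → Net X → Prop) (N N' : Net X) : Prop :=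
  Relation.ReflTransGen (fun A B => R A B ∨ NetIso A B) N N'

/-- `N'` can be reached from `N` by at most `n` `R`-moves (up to labelled isomorphism). -/
def stepsLE {X : Type} (R : Net X → Net X → Prop) : ℕ → Net X → Net X → Prop
  | 0, N, N' => NetIso N N'
  | n + 1, N, N' => stepsLE R n N N' ∨ ∃ M, R N M ∧ stepsLE R n M N'

/-- `(V, E)` is a subdivision of `(W, F)` via the injection `φ`: every vertex outside
the image of `φ` is a redundant (indeg 1, outdeg 1) node, and `F a b` holds iff there
is an `E`-path from `φ a` to `φ b` all of whose internal vertices avoid the image. -/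
def IsSubdivision {W V : Type} (F : W → W → Prop) (E : V → V → Prop) (φ : W → V) : Prop :=
  Function.Injective φ ∧
  (∀ v, v ∉ Set.range φ → indeg E v = 1 ∧ outdeg E v = 1) ∧
  (∀ a b, F a b ↔ ∃ l : List V,
      List.Chain E (φ a) (l ++ [φ b]) ∧ ∀ x ∈ l, x ∉ Set.range φ)

/-- A rooted phylogenetic tree on `X`: a phylogenetic network with no reticulations. -/
def IsTree {X : Type} (T : Net X) : Prop := T.valid ∧ reticCount T.E = 0

/-- The tree `T` is embedded in `N`: some `X`-labelled subgraph of `N` is a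
subdivision of `T`. -/
def EmbeddedTree {X : Type} (T N : Net X) : Prop :=
  IsTree T ∧ ∃ (E' : N.V → N.V → Prop) (φ : T.V → N.V),
    (∀ a b, E' a b → N.E a b) ∧ IsSubdivision T.E E' φ ∧ ∀ x, φ (T.lab x) = N.lab x

/-- The digraph contains a triangle `t, s, r` with edges `(t,s), (t,r), (s,r)`. -/
def HasTriangle {V : Type} (E : V → V → Prop) : Prop :=
  ∃ t s r, E t s ∧ E t r ∧ E s r

/-- The network has `k` reticulations at the top, with nodes `c` (child of the root),
`a i`, `b i` for `1 ≤ i ≤ k`. -/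
def ReticsAtTop {V : Type} (E : V → V → Prop) (k : ℕ) (c : V) (a b : ℕ → V) : Prop :=
  (∃ ρ, IsRoot E ρ ∧ E ρ c) ∧ E c (a 1) ∧ E c (b 1) ∧
  (∀ i, 1 ≤ i → i ≤ k → E (a i) (b i) ∧ IsSplit E (a i) ∧ IsRetic E (b i)) ∧
  (∀ i, 1 ≤ i → i < k →
    ((E (a i) (a (i + 1)) ∧ E (b i) (b (i + 1))) ∨
     (E (a i) (b (i + 1)) ∧ E (b i) (a (i + 1)))))

/-- The network has `k` reticulations neatly at the top. -/
def NeatlyAtTop {V : Type} (E : V → V → Prop) (k : ℕ) (c : V) (a b : ℕ → V) : Prop :=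
  (∃ ρ, IsRoot E ρ ∧ E ρ c) ∧ E c (a 1) ∧ E c (b 1) ∧
  (∀ i, 1 ≤ i → i ≤ k → E (a i) (b i) ∧ IsSplit E (a i) ∧ IsRetic E (b i)) ∧
  (∀ i, 1 ≤ i → i < k → E (a i) (a (i + 1)) ∧ E (b i) (b (i + 1)))


/-! ### Auxiliary development for Statement 9 -/

section Aux

open Relation Sum

variable {X : Type}

lemma indeg_eq {V : Type} (E : V → V → Prop) (v : V) :
    indeg E v = {u | E u v}.ncard := (Nat.card_coe_set_eq _)

lemma outdeg_eq {V : Type} (E : V → V → Prop) (v : V) :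
    outdeg E v = {w | E v w}.ncard := (Nat.card_coe_set_eq _)

lemma acyclic_ne {V : Type} {E : V → V → Prop} (h : Acyclic E) {u v : V} (e : E u v) :
    u ≠ v := fun huv => h u (TransGen.single (huv ▸ e))

/-- well-foundedness of an acyclic relation on a finite type -/
lemma acyclic_wf {V : Type} [Finite V] {E : V → V → Prop} (h : Acyclic E) :
    WellFounded E := by
  have : IsTrans V (TransGen E) := ⟨fun _ _ _ => TransGen.trans⟩
  have : IsIrrefl V (TransGen E) := ⟨h⟩
  exact Subrelation.wf (fun {a b} hab => TransGen.single hab)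
    (Finite.wellFounded_of_trans_of_irrefl (TransGen E))

lemma acyclic_wf_flip {V : Type} [Finite V] {E : V → V → Prop} (h : Acyclic E) :
    WellFounded (fun a b => E b a) := by
  apply acyclic_wf
  intro v hv
  exact h v (by simpa using (TransGen.swap _ _ hv))

/-- number of strict ancestors -/
def aCount {V : Type} (E : V → V → Prop) (v : V) : ℕ :=
  {u | TransGen E u v}.ncard

lemma aCount_lt {V : Type} [Finite V] {E : V → V → Prop} (hacyc : Acyclic E)
    {p q : V} (e : E p q) : aCount E p < aCount E q := by
  apply Set.ncard_lt_ncard _ (Set.toFinite _)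
  constructor
  · intro u hu; exact hu.tail e
  · intro hsub
    exact hacyc p (hsub (TransGen.single e))

lemma card_le_of_imp {V : Type} [Finite V] {P Q : V → Prop} (h : ∀ v, P v → Q v) :
    Nat.card {v // P v} ≤ Nat.card {v // Q v} :=
  Nat.card_le_card_of_injective (fun x => ⟨x.1, h x.1 x.2⟩)
    (fun x y hxy => Subtype.ext (by simpa [Subtype.ext_iff] using hxy))

lemma eq_of_imp_of_card_le {V : Type} [Finite V] {P Q : V → Prop}
    (h : ∀ v, P v → Q v) (hc : Nat.card {v // Q v} ≤ Nat.card {v // P v}) :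
    ∀ v, Q v → P v := by
  have hs : {v | P v} = {v | Q v} := Set.eq_of_subset_of_ncard_le h
    (by rw [← Nat.card_coe_set_eq, ← Nat.card_coe_set_eq]; exact hc)
    (Set.toFinite _)
  intro v hv
  exact (Set.ext_iff.mp hs v).mpr hv

lemma card_one_unique {V : Type} {P : V → Prop} (h : Nat.card {v // P v} = 1) :
    (∃ v, P v) ∧ ∀ v w, P v → P w → v = w := by
  rw [Nat.card_eq_one_iff_exists] at h
  obtain ⟨⟨v, hv⟩, hu⟩ := h
  refine ⟨⟨v, hv⟩, fun a b ha hb => ?_⟩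
  have h1 : a = v := congrArg Subtype.val (hu ⟨a, ha⟩)
  have h2 : b = v := congrArg Subtype.val (hu ⟨b, hb⟩)
  rw [h1, h2]

lemma card_two_exists {V : Type} {P : V → Prop} (h : Nat.card {v // P v} = 2) :
    ∃ v w, v ≠ w ∧ P v ∧ P w ∧ ∀ z, P z → z = v ∨ z = w := by
  rw [Nat.card_eq_two_iff] at h
  obtain ⟨⟨v, hv⟩, ⟨w, hw⟩, hne, huniv⟩ := h
  refine ⟨v, w, fun hvw => hne (Subtype.ext hvw), hv, hw, fun z hz => ?_⟩
  have : (⟨z, hz⟩ : {v // P v}) ∈ ({⟨v, hv⟩, ⟨w, hw⟩} : Set {v // P v}) := by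
    rw [huniv]; trivial
  rcases this with h | h
  · exact Or.inl (congrArg Subtype.val h)
  · exact Or.inr (congrArg Subtype.val h)

lemma card_ge_two {V : Type} [Finite V] {P : V → Prop} {v w : V}
    (hv : P v) (hw : P w) (hne : v ≠ w) : 2 ≤ Nat.card {v // P v} := by
  have : Nat.card ({v, w} : Set V) ≤ Nat.card {v // P v} := by
    apply Nat.card_le_card_of_injective
      (fun x => (⟨x.1, by rcases x with ⟨x, hx | hx⟩ <;> first | (rw [Set.mem_singleton_iff] at hx; subst hx; assumption) | (rw [Set.mem_singleton_iff.symm.trans Set.mem_singleton_iff] at hx; subst hx; assumption) | (subst hx; assumption)⟩ : {v // P v}))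
    intro x y hxy
    exact Subtype.ext (by simpa [Subtype.ext_iff] using hxy)
  refine le_trans ?_ this
  rw [Nat.card_coe_set_eq, Set.ncard_pair hne]

lemma card_ge_three {V : Type} [Finite V] {P : V → Prop} {u v w : V}
    (hu : P u) (hv : P v) (hw : P w) (huv : u ≠ v) (huw : u ≠ w) (hvw : v ≠ w) :
    3 ≤ Nat.card {v // P v} := by
  have : Nat.card ({u, v, w} : Set V) ≤ Nat.card {v // P v} := by
    apply Nat.card_le_card_of_injective
      (fun x => (⟨x.1, by rcases x with ⟨x, hx | hx | hx⟩ <;> first | (rw [Set.mem_singleton_iff] at hx; subst hx; assumption) | (rw [Set.mem_singleton_iff.symm.trans Set.mem_singleton_iff] at hx; subst hx; assumption) | (subst hx; assumption)⟩ : {v // P v}))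
    intro x y hxy
    exact Subtype.ext (by simpa [Subtype.ext_iff] using hxy)
  refine le_trans ?_ this
  rw [Nat.card_coe_set_eq]
  rw [Set.ncard_insert_of_notMem (by simp [huv, huw]) (Set.toFinite _),
    Set.ncard_pair hvw]

lemma card_pos_of_exists {V : Type} [Finite V] {P : V → Prop} {v : V} (hv : P v) :
    1 ≤ Nat.card {v // P v} := by
  have : Nat.card ({v} : Set V) ≤ Nat.card {v // P v} := by
    apply Nat.card_le_card_of_injective
      (fun x => (⟨x.1, by rcases x with ⟨x, hx⟩; rw [Set.mem_singleton_iff] at hx; subst hx; assumption⟩ : {v // P v}))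
    intro x y hxy
    exact Subtype.ext (by simpa [Subtype.ext_iff] using hxy)
  simpa using this

end Aux

section Cfg

open Relation Sum

variable {X : Type}

lemma prod_fst_eq {α β : Type} {p a : α} {q b : β} (h : (p, q) = (a, b)) : p = a :=
  (Prod.ext_iff.mp h).1

lemma prod_snd_eq {α β : Type} {p a : α} {q b : β} (h : (p, q) = (a, b)) : q = b :=
  (Prod.ext_iff.mp h).2

/-- The canonical tier-1 network built from the tree `T` by subdividing the edge
`(a,b)` with a new node `x = inr false`, subdividing `(s,t)` with a new node
`y = inr true`, and adding the edge `(x,y)`. -/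
def CfgE (T : Net X) (a b s t : T.V) : (T.V ⊕ Bool) → (T.V ⊕ Bool) → Prop :=
  fun v w => match v, w with
  | inl p, inl q => T.E p q ∧ (p, q) ≠ (a, b) ∧ (p, q) ≠ (s, t)
  | inl p, inr false => p = a
  | inl p, inr true => p = s
  | inr false, inl q => q = b
  | inr true, inl q => q = t
  | inr false, inr true => True
  | _, _ => False

def CfgNet (T : Net X) (a b s t : T.V) : Net X :=
  ⟨T.V ⊕ Bool, inferInstance, CfgE T a b s t, fun z => inl (T.lab z)⟩

/-- Side conditions making `CfgNet T a b s t` a valid tier-1 network. -/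
def Ok (T : Net X) (a b s t : T.V) : Prop :=
  T.E a b ∧ T.E s t ∧ (a, b) ≠ (s, t) ∧ ¬ Relation.ReflTransGen T.E t a

variable {T : Net X} {a b s t : T.V}

lemma CfgNet_E (T : Net X) (a b s t : T.V) : (CfgNet T a b s t).E = CfgE T a b s t := rfl
lemma CfgNet_lab (T : Net X) (a b s t : T.V) :
    (CfgNet T a b s t).lab = fun z => inl (T.lab z) := rfl

lemma cfg_outdeg_inl (hok : Ok T a b s t) (p : T.V) :
    outdeg (CfgE T a b s t) (inl p) = outdeg T.E p := by
  classical
  obtain ⟨hab, hst, hne, hcyc⟩ := hok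
  have key : Function.Bijective (fun (q : {q // T.E p q}) =>
      (if h1 : (p, q.1) = (a, b) then ⟨inr false, prod_fst_eq h1⟩
       else if h2 : (p, q.1) = (s, t) then ⟨inr true, prod_fst_eq h2⟩
       else ⟨inl q.1, ⟨q.2, h1, h2⟩⟩ : {w // CfgE T a b s t (inl p) w})) := by
    constructor
    · intro q1 q2 hq
      simp only at hq
      split_ifs at hq <;>
        (replace hq := congrArg Subtype.val hq; simp -failIfUnchanged only [Sum.inl.injEq, Sum.inr.injEq] at hq)
      all_goals
        first
        | exact Subtype.ext hq
        | (apply Subtype.ext;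
           first
           | exact (prod_snd_eq (by assumption : (p, (q1 : T.V)) = (a, b))).trans
               (prod_snd_eq (by assumption : (p, (q2 : T.V)) = (a, b))).symm
           | exact (prod_snd_eq (by assumption : (p, (q1 : T.V)) = (s, t))).trans
               (prod_snd_eq (by assumption : (p, (q2 : T.V)) = (s, t))).symm)
        | exact absurd hq (by simp)
    · rintro ⟨w, hw⟩
      rcases w with q | bb
      · refine ⟨⟨q, hw.1⟩, ?_⟩
        simp only
        split_ifs with h1 h2
        · exact absurd h1 hw.2.1
        · exact absurd h2 hw.2.2
        · rfl
      · rcases bb with _ | _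
        · have hpa : p = a := hw
          refine ⟨⟨b, by rw [hpa]; exact hab⟩, ?_⟩
          simp only
          split_ifs with h1 h2
          · rfl
          · exact absurd (show (p, b) = (a, b) by rw [hpa]) h1
          · exact absurd (show (p, b) = (a, b) by rw [hpa]) h1
        · have hps : p = s := hw
          refine ⟨⟨t, by rw [hps]; exact hst⟩, ?_⟩
          simp only
          split_ifs with h1 h2
          · exact absurd (h1.symm.trans (show (p, t) = (s, t) by rw [hps])) hne
          · rfl
          · exact absurd (show (p, t) = (s, t) by rw [hps]) h2
  exact (Nat.card_eq_of_bijective _ key).symm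

lemma cfg_indeg_inl (hok : Ok T a b s t) (p : T.V) :
    indeg (CfgE T a b s t) (inl p) = indeg T.E p := by
  classical
  obtain ⟨hab, hst, hne, hcyc⟩ := hok
  have key : Function.Bijective (fun (q : {q // T.E q p}) =>
      (if h1 : (q.1, p) = (a, b) then ⟨inr false, prod_snd_eq h1⟩
       else if h2 : (q.1, p) = (s, t) then ⟨inr true, prod_snd_eq h2⟩
       else ⟨inl q.1, ⟨q.2, h1, h2⟩⟩ : {w // CfgE T a b s t w (inl p)})) := by
    constructor
    · intro q1 q2 hq
      simp only at hq
      split_ifs at hq <;>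
        (replace hq := congrArg Subtype.val hq; simp -failIfUnchanged only [Sum.inl.injEq, Sum.inr.injEq] at hq)
      all_goals
        first
        | exact Subtype.ext hq
        | (apply Subtype.ext;
           first
           | exact (prod_fst_eq (by assumption : ((q1 : T.V), p) = (a, b))).trans
               (prod_fst_eq (by assumption : ((q2 : T.V), p) = (a, b))).symm
           | exact (prod_fst_eq (by assumption : ((q1 : T.V), p) = (s, t))).trans
               (prod_fst_eq (by assumption : ((q2 : T.V), p) = (s, t))).symm)
        | exact absurd hq (by simp)
    · rintro ⟨w, hw⟩
      rcases w with q | bb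
      · refine ⟨⟨q, hw.1⟩, ?_⟩
        simp only
        split_ifs with h1 h2
        · exact absurd h1 hw.2.1
        · exact absurd h2 hw.2.2
        · rfl
      · rcases bb with _ | _
        · have hpb : p = b := hw
          refine ⟨⟨a, by rw [hpb]; exact hab⟩, ?_⟩
          simp only
          split_ifs with h1 h2
          · rfl
          · exact absurd (show (a, p) = (a, b) by rw [hpb]) h1
          · exact absurd (show (a, p) = (a, b) by rw [hpb]) h1
        · have hpt : p = t := hw
          refine ⟨⟨s, by rw [hpt]; exact hst⟩, ?_⟩
          simp only
          split_ifs with h1 h2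
          · exact absurd (h1.symm.trans (show (s, p) = (s, t) by rw [hpt])) hne
          · rfl
          · exact absurd (show (s, p) = (s, t) by rw [hpt]) h2
  exact (Nat.card_eq_of_bijective _ key).symm

lemma cfg_outdeg_x : outdeg (CfgE T a b s t) (inr false) = 2 := by
  show Nat.card {w // CfgE T a b s t (inr false) w} = 2
  rw [Nat.card_eq_two_iff]
  refine ⟨⟨inl b, rfl⟩, ⟨inr true, trivial⟩, fun h => Sum.inl_ne_inr (congrArg Subtype.val h), ?_⟩
  ext ⟨w, hw⟩
  simp only [Set.mem_insert_iff, Set.mem_singleton_iff, Set.mem_univ, iff_true]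
  rcases w with q | bb
  · exact Or.inl (Subtype.ext (show (inl q : T.V ⊕ Bool) = inl b by
      rw [show q = b from hw]))
  · rcases bb with _ | _
    · exact hw.elim
    · exact Or.inr rfl

lemma cfg_indeg_x : indeg (CfgE T a b s t) (inr false) = 1 := by
  show Nat.card {w // CfgE T a b s t w (inr false)} = 1
  rw [Nat.card_eq_one_iff_exists]
  refine ⟨⟨inl a, rfl⟩, ?_⟩
  rintro ⟨w, hw⟩
  rcases w with q | bb
  · exact Subtype.ext (show (inl q : T.V ⊕ Bool) = inl a by rw [show q = a from hw])
  · rcases bb with _ | _ <;> exact hw.elim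

lemma cfg_outdeg_y : outdeg (CfgE T a b s t) (inr true) = 1 := by
  show Nat.card {w // CfgE T a b s t (inr true) w} = 1
  rw [Nat.card_eq_one_iff_exists]
  refine ⟨⟨inl t, rfl⟩, ?_⟩
  rintro ⟨w, hw⟩
  rcases w with q | bb
  · exact Subtype.ext (show (inl q : T.V ⊕ Bool) = inl t by rw [show q = t from hw])
  · rcases bb with _ | _ <;> exact hw.elim

lemma cfg_indeg_y : indeg (CfgE T a b s t) (inr true) = 2 := by
  show Nat.card {w // CfgE T a b s t w (inr true)} = 2
  rw [Nat.card_eq_two_iff]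
  refine ⟨⟨inl s, rfl⟩, ⟨inr false, trivial⟩, fun h => Sum.inl_ne_inr (congrArg Subtype.val h), ?_⟩
  ext ⟨w, hw⟩
  simp only [Set.mem_insert_iff, Set.mem_singleton_iff, Set.mem_univ, iff_true]
  rcases w with q | bb
  · exact Or.inl (Subtype.ext (show (inl q : T.V ⊕ Bool) = inl s by
      rw [show q = s from hw]))
  · rcases bb with _ | _
    · exact Or.inr rfl
    · exact hw.elim

end Cfg
section Valid

open Relation Sum

variable {X : Type} {T : Net X} {a b s t : T.V}

lemma tree_no_retic (hT : IsTree T) : ∀ v, ¬ IsRetic T.E v := by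
  intro v hv
  have h0 : Nat.card {v // IsRetic T.E v} = 0 := hT.2
  have h1 := card_pos_of_exists hv
  omega

lemma tree_types (hT : IsTree T) (v : T.V) :
    IsRoot T.E v ∨ IsLeafNode T.E v ∨ IsSplit T.E v := by
  rcases hT.1.node_types v with h | h | h | h
  · exact Or.inl h
  · exact Or.inr (Or.inl h)
  · exact Or.inr (Or.inr h)
  · exact absurd h (tree_no_retic hT v)

open scoped Classical in
/-- A height function certifying acyclicity of `CfgE`. -/
noncomputable def cfgH (T : Net X) (t : T.V) (v : T.V) : ℕ :=
  aCount T.E v + (if Relation.ReflTransGen T.E t v then (Set.univ : Set T.V).ncard + 1 else 0)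

lemma cfgH_mono (hacyc : Acyclic T.E) {p q : T.V} (e : T.E p q) (t : T.V) :
    cfgH T t p < cfgH T t q := by
  classical
  have h1 := aCount_lt hacyc e
  unfold cfgH
  by_cases h : Relation.ReflTransGen T.E t p
  · rw [if_pos h, if_pos (h.tail e)]; omega
  · rw [if_neg h]
    by_cases h' : Relation.ReflTransGen T.E t q
    · rw [if_pos h']; omega
    · rw [if_neg h']; omega

lemma cfgH_bound (hna : ¬ Relation.ReflTransGen T.E t a) :
    cfgH T t a + 1 ≤ cfgH T t t := by
  classical
  unfold cfgH
  rw [if_neg hna, if_pos (Relation.ReflTransGen.refl)]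
  have : aCount T.E a ≤ (Set.univ : Set T.V).ncard :=
    Set.ncard_le_ncard (Set.subset_univ _) (Set.toFinite _)
  omega

lemma cfgH_pos : 1 ≤ cfgH T t t := by
  classical
  unfold cfgH
  rw [if_pos (Relation.ReflTransGen.refl)]
  omega

lemma cfg_acyclic (hT : IsTree T) (hok : Ok T a b s t) :
    Acyclic (CfgE T a b s t) := by
  obtain ⟨hab, hst, hne, hcyc⟩ := hok
  have hacyc := hT.1.acyclic
  set H : T.V ⊕ Bool → ℕ := fun v => match v with
    | inl p => 3 * cfgH T t p
    | inr false => 3 * cfgH T t a + 1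
    | inr true => 3 * cfgH T t t - 1 with hH
  have step : ∀ v w, CfgE T a b s t v w → H v < H w := by
    rintro (p | bf) (q | bf') h
    · have := cfgH_mono hacyc h.1 t; simp only [hH]; omega
    · rcases bf' with _ | _
      · have hp : p = a := h
        have h1 := cfgH_bound (T := T) hcyc
        have h2 := cfgH_pos (T := T) (t := t)
        simp only [hH, hp]; omega
      · have hp : p = s := h
        have := cfgH_mono hacyc hst t
        have h2 := cfgH_pos (T := T) (t := t)
        simp only [hH, hp]; omega
    · rcases bf with _ | _
      · have hq : q = b := h
        have := cfgH_mono hacyc hab t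
        simp only [hH, hq]; omega
      · have hq : q = t := h
        have h2 := cfgH_pos (T := T) (t := t)
        simp only [hH, hq]; omega
    · rcases bf with _ | _ <;> rcases bf' with _ | _
      · exact h.elim
      · have h1 := cfgH_bound (T := T) hcyc
        have h2 := cfgH_pos (T := T) (t := t)
        simp only [hH]; omega
      · exact h.elim
      · exact h.elim
  intro v hv
  have : ∀ v w, Relation.TransGen (CfgE T a b s t) v w → H v < H w := by
    intro v w h
    induction h with
    | single h => exact step _ _ h
    | tail _ h ih => exact lt_trans ih (step _ _ h)
  exact lt_irrefl _ (this v v hv)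

lemma cfg_valid (hT : IsTree T) (hok : Ok T a b s t) : (CfgNet T a b s t).valid := by
  have hTv := hT.1
  constructor
  · exact cfg_acyclic hT hok
  · -- root_unique
    obtain ⟨ρ, hρ, hρu⟩ := hTv.root_unique
    refine ⟨inl ρ, ?_, ?_⟩
    · exact ⟨by rw [CfgNet_E]; exact (cfg_indeg_inl hok _).trans hρ.1,
        by rw [CfgNet_E]; exact (cfg_outdeg_inl hok _).trans hρ.2⟩
    · rintro (p | bf) hv
      · have h1 : indeg (CfgE T a b s t) (inl p) = 0 := hv.1
        have h2 : outdeg (CfgE T a b s t) (inl p) = 1 := hv.2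
        rw [cfg_indeg_inl hok] at h1
        rw [cfg_outdeg_inl hok] at h2
        rw [hρu p ⟨h1, h2⟩]
      · exfalso
        rcases bf with _ | _
        · have h1 : indeg (CfgE T a b s t) (inr false) = 0 := hv.1
          rw [cfg_indeg_x] at h1; omega
        · have h1 : indeg (CfgE T a b s t) (inr true) = 0 := hv.1
          rw [cfg_indeg_y] at h1; omega
  · -- lab_inj
    intro z w h
    have h' : (inl (T.lab z) : T.V ⊕ Bool) = inl (T.lab w) := h
    exact hTv.lab_inj (by injection h')
  · -- leaf_iff
    rintro (p | bf)
    · constructor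
      · intro hv
        have h1 : indeg (CfgE T a b s t) (inl p) = 1 := hv.1
        have h2 : outdeg (CfgE T a b s t) (inl p) = 0 := hv.2
        rw [cfg_indeg_inl hok] at h1
        rw [cfg_outdeg_inl hok] at h2
        obtain ⟨z, hz⟩ := (hTv.leaf_iff p).mp ⟨h1, h2⟩
        exact ⟨z, by rw [← hz]; rfl⟩
      · rintro ⟨z, hz⟩
        simp only [CfgNet_lab] at hz
        have hz' : T.lab z = p := by injection hz
        have : IsLeafNode T.E p := (hTv.leaf_iff p).mpr ⟨z, hz'⟩
        exact ⟨by rw [CfgNet_E]; exact (cfg_indeg_inl hok _).trans this.1,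
          by rw [CfgNet_E]; exact (cfg_outdeg_inl hok _).trans this.2⟩
    · constructor
      · intro hv
        exfalso
        rcases bf with _ | _
        · have h2 : outdeg (CfgE T a b s t) (inr false) = 0 := hv.2
          rw [cfg_outdeg_x] at h2; omega
        · have h2 : outdeg (CfgE T a b s t) (inr true) = 0 := hv.2
          rw [cfg_outdeg_y] at h2; omega
      · rintro ⟨z, hz⟩
        exact absurd hz (by simp [CfgNet_lab])
  · -- node_types
    rintro (p | bf)
    · rcases tree_types hT p with h | h | h
      · exact Or.inl ⟨by rw [CfgNet_E]; exact (cfg_indeg_inl hok _).trans h.1,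
          by rw [CfgNet_E]; exact (cfg_outdeg_inl hok _).trans h.2⟩
      · exact Or.inr (Or.inl ⟨by rw [CfgNet_E]; exact (cfg_indeg_inl hok _).trans h.1,
          by rw [CfgNet_E]; exact (cfg_outdeg_inl hok _).trans h.2⟩)
      · exact Or.inr (Or.inr (Or.inl ⟨by rw [CfgNet_E]; exact (cfg_indeg_inl hok _).trans h.1,
          by rw [CfgNet_E]; exact (cfg_outdeg_inl hok _).trans h.2⟩))
    · rcases bf with _ | _
      · exact Or.inr (Or.inr (Or.inl ⟨by rw [CfgNet_E]; exact cfg_indeg_x,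
          by rw [CfgNet_E]; exact cfg_outdeg_x⟩))
      · exact Or.inr (Or.inr (Or.inr ⟨by rw [CfgNet_E]; exact cfg_indeg_y,
          by rw [CfgNet_E]; exact cfg_outdeg_y⟩))

end Valid
section Moves

open Relation Sum

variable {X : Type} {T : Net X}

lemma cfgE_ll {a b s t p q : T.V} :
    CfgE T a b s t (inl p) (inl q) ↔ T.E p q ∧ (p, q) ≠ (a, b) ∧ (p, q) ≠ (s, t) := Iff.rfl
lemma cfgE_lx {a b s t p : T.V} : CfgE T a b s t (inl p) (inr false) ↔ p = a := Iff.rfl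
lemma cfgE_ly {a b s t p : T.V} : CfgE T a b s t (inl p) (inr true) ↔ p = s := Iff.rfl
lemma cfgE_xl {a b s t q : T.V} : CfgE T a b s t (inr false) (inl q) ↔ q = b := Iff.rfl
lemma cfgE_yl {a b s t q : T.V} : CfgE T a b s t (inr true) (inl q) ↔ q = t := Iff.rfl
lemma cfgE_xy {a b s t : T.V} : CfgE T a b s t (inr false) (inr true) ↔ True := Iff.rfl
lemma cfgE_yx {a b s t : T.V} : CfgE T a b s t (inr true) (inr false) ↔ False := Iff.rfl
lemma cfgE_xx {a b s t : T.V} : CfgE T a b s t (inr false) (inr false) ↔ False := Iff.rfl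
lemma cfgE_yy {a b s t : T.V} : CfgE T a b s t (inr true) (inr true) ↔ False := Iff.rfl

lemma head_jump (hT : IsTree T) {a b s t s' t' : T.V} (hok : Ok T a b s t)
    (hok' : Ok T a b s' t') (hne : (s, t) ≠ (s', t')) :
    HeadMoveStep (CfgNet T a b s t) (CfgNet T a b s' t') := by
  obtain ⟨hab, hst, hnab, hcyc⟩ := hok
  obtain ⟨-, hst', hnab', hcyc'⟩ := hok'
  refine ⟨cfg_valid hT ⟨hab, hst, hnab, hcyc⟩, cfg_valid hT ⟨hab, hst', hnab', hcyc'⟩,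
    inr false, inr true, inl s, inl t, inl s', inl t',
    trivial, rfl, Sum.inl_ne_inr, rfl, ⟨hst', Ne.symm hnab', Ne.symm hne⟩,
    Equiv.refl _, ?_, fun z => rfl⟩
  intro z w
  show headMoveEdges (CfgE T a b s t) (inr false) (inr true) (inl s) (inl t)
      (inl s') (inl t') z w ↔ CfgE T a b s' t' z w
  rcases z with p | bf
  · rcases w with q | bf'
    · show _ ↔ T.E p q ∧ (p, q) ≠ (a, b) ∧ (p, q) ≠ (s', t')
      unfold headMoveEdges
      rw [cfgE_ll]
      constructor
      · rintro (⟨⟨h1, h2, h3⟩, g1, g2, g3, g4⟩ | h | h | h | h)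
        · refine ⟨h1, h2, fun hc => g3 ?_⟩
          rw [Prod.ext_iff] at hc
          exact Prod.ext_iff.mpr ⟨congrArg inl hc.1, congrArg inl hc.2⟩
        · rw [Prod.ext_iff] at h
          have e1 : p = s := by injection h.1
          have e2 : q = t := by injection h.2
          rw [e1, e2]
          exact ⟨hst, Ne.symm hnab, hne⟩
        · exact absurd ((Prod.ext_iff.mp h).2) (by simp)
        · exact absurd ((Prod.ext_iff.mp h).1) (by simp)
        · exact absurd ((Prod.ext_iff.mp h).1) (by simp)
      · rintro ⟨h1, h2, h3⟩
        by_cases hc : (p, q) = (s, t)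
        · right; left
          rw [Prod.ext_iff] at hc
          exact Prod.ext_iff.mpr ⟨congrArg inl hc.1, congrArg inl hc.2⟩
        · left
          refine ⟨⟨h1, h2, hc⟩, by simp, by simp, fun hcc => h3 ?_, by simp⟩
          rw [Prod.ext_iff] at hcc
          have e1 : p = s' := by injection hcc.1
          have e2 : q = t' := by injection hcc.2
          rw [Prod.ext_iff]
          exact ⟨e1, e2⟩
    · rcases bf' with _ | _
      · show _ ↔ p = a
        unfold headMoveEdges
        rw [cfgE_lx]
        constructor
        · rintro (⟨h1, -⟩ | h | h | h | h)
          · exact h1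
          · exact absurd ((Prod.ext_iff.mp h).2) (by simp)
          · exact absurd ((Prod.ext_iff.mp h).2) (by simp)
          · exact absurd ((Prod.ext_iff.mp h).1) (by simp)
          · exact absurd ((Prod.ext_iff.mp h).1) (by simp)
        · intro h
          exact Or.inl ⟨h, by simp, by simp, by simp, by simp⟩
      · show _ ↔ p = s'
        unfold headMoveEdges
        rw [cfgE_ly]
        constructor
        · rintro (⟨h1, g1, -⟩ | h | h | h | h)
          · refine absurd (show ((inl p : T.V ⊕ Bool), (inr true : T.V ⊕ Bool)) =
                ((inl s : T.V ⊕ Bool), (inr true : T.V ⊕ Bool)) from ?_) g1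
            exact Prod.ext_iff.mpr ⟨congrArg inl h1, rfl⟩
          · exact absurd ((Prod.ext_iff.mp h).2) (by simp)
          · have := (Prod.ext_iff.mp h).1
            injection this
          · exact absurd ((Prod.ext_iff.mp h).1) (by simp)
          · exact absurd ((Prod.ext_iff.mp h).1) (by simp)
        · intro h
          right; right; left
          exact Prod.ext_iff.mpr ⟨congrArg inl h, rfl⟩
  · rcases bf with _ | _
    · rcases w with q | bf'
      · show _ ↔ q = b
        unfold headMoveEdges
        rw [cfgE_xl]
        constructor
        · rintro (⟨h1, -⟩ | h | h | h | h)
          · exact h1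
          · exact absurd ((Prod.ext_iff.mp h).1) (by simp)
          · exact absurd ((Prod.ext_iff.mp h).2) (by simp)
          · exact absurd ((Prod.ext_iff.mp h).1) (by simp)
          · exact absurd ((Prod.ext_iff.mp h).2) (by simp)
        · intro h
          exact Or.inl ⟨h, by simp, by simp, by simp, by simp⟩
      · rcases bf' with _ | _
        · show _ ↔ False
          unfold headMoveEdges
          rw [cfgE_xx]
          constructor
          · rintro (⟨h1, -⟩ | h | h | h | h)
            · exact h1
            · exact absurd ((Prod.ext_iff.mp h).1) (by simp)
            · exact absurd ((Prod.ext_iff.mp h).1) (by simp)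
            · exact absurd ((Prod.ext_iff.mp h).1) (by simp)
            · exact absurd ((Prod.ext_iff.mp h).2) (by simp)
          · exact False.elim
        · show _ ↔ True
          unfold headMoveEdges
          constructor
          · intro; trivial
          · intro
            right; right; right; right; rfl
    · rcases w with q | bf'
      · show _ ↔ q = t'
        unfold headMoveEdges
        rw [cfgE_yl]
        constructor
        · rintro (⟨h1, -, g2, -⟩ | h | h | h | h)
          · refine absurd (show ((inr true : T.V ⊕ Bool), (inl q : T.V ⊕ Bool)) =
                ((inr true : T.V ⊕ Bool), (inl t : T.V ⊕ Bool)) from ?_) g2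
            exact Prod.ext_iff.mpr ⟨rfl, congrArg inl h1⟩
          · exact absurd ((Prod.ext_iff.mp h).1) (by simp)
          · exact absurd ((Prod.ext_iff.mp h).2) (by simp)
          · have := (Prod.ext_iff.mp h).2
            injection this
          · exact absurd ((Prod.ext_iff.mp h).1) (by simp)
        · intro h
          right; right; right; left
          exact Prod.ext_iff.mpr ⟨rfl, congrArg inl h⟩
      · rcases bf' with _ | _
        · show _ ↔ False
          unfold headMoveEdges
          rw [cfgE_yx]
          constructor
          · rintro (⟨h1, -⟩ | h | h | h | h)
            · exact h1
            · exact absurd ((Prod.ext_iff.mp h).1) (by simp)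
            · exact absurd ((Prod.ext_iff.mp h).1) (by simp)
            · exact absurd ((Prod.ext_iff.mp h).2) (by simp)
            · exact absurd ((Prod.ext_iff.mp h).1) (by simp)
          · exact False.elim
        · show _ ↔ False
          unfold headMoveEdges
          rw [cfgE_yy]
          constructor
          · rintro (⟨h1, -⟩ | h | h | h | h)
            · exact h1
            · exact absurd ((Prod.ext_iff.mp h).1) (by simp)
            · exact absurd ((Prod.ext_iff.mp h).1) (by simp)
            · exact absurd ((Prod.ext_iff.mp h).2) (by simp)
            · exact absurd ((Prod.ext_iff.mp h).1) (by simp)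
          · exact False.elim

end Moves
section Triangle

open Relation Sum

variable {X : Type} {T : Net X}

lemma lab_ne_of_edge (hT : IsTree T) {a d : T.V} (had : T.E a d) (z : X) :
    T.lab z ≠ a := by
  intro h
  have hleaf : IsLeafNode T.E (T.lab z) := (hT.1.leaf_iff _).mpr ⟨z, rfl⟩
  have : outdeg T.E a ≠ 0 := by
    have := card_pos_of_exists (P := fun w => T.E a w) had
    intro h0
    rw [show Nat.card {w // T.E a w} = outdeg T.E a from rfl] at this
    omega
  rw [h] at hleaf
  exact this hleaf.2

/-- Relocation of a triangle: the network with tail on `(p,a)` and head at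
the top of `(a,d)` is isomorphic (as a labelled digraph) to the network with tail
on `(a,b)` and head at the top of `(a,d)`. -/
lemma triangle_iso (hT : IsTree T) {p a b d : T.V} (hpa : T.E p a) (hab : T.E a b)
    (had : T.E a d) (hbd : b ≠ d) (hin : ∀ q, T.E q a → q = p)
    (hout : ∀ q, T.E a q → q = b ∨ q = d) :
    NetIso (CfgNet T p a a d) (CfgNet T a b a d) := by
  have hacyc := hT.1.acyclic
  have hpa' : p ≠ a := acyclic_ne hacyc hpa
  have hab' : a ≠ b := acyclic_ne hacyc hab
  have had' : a ≠ d := acyclic_ne hacyc had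
  have haa : ¬ T.E a a := fun h => (acyclic_ne hacyc h) rfl
  classical
  set σ : (T.V ⊕ Bool) ≃ (T.V ⊕ Bool) := Equiv.swap (inl a) (inr false) with hσ
  have hσa : σ (inl a) = inr false := by rw [hσ]; exact Equiv.swap_apply_left _ _
  have hσx : σ (inr false) = inl a := by rw [hσ]; exact Equiv.swap_apply_right _ _
  have hσo : ∀ q : T.V, q ≠ a → σ (inl q) = inl q := by
    intro q hq; rw [hσ]; exact Equiv.swap_apply_of_ne_of_ne (by simp [hq]) (by simp)
  have hσy : σ (inr true) = inr true := by
    rw [hσ]; exact Equiv.swap_apply_of_ne_of_ne (by simp) (by simp)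
  refine ⟨σ, ?_, ?_⟩
  · intro z w
    show CfgE T p a a d z w ↔ CfgE T a b a d (σ z) (σ w)
    rcases z with q | bf
    · by_cases hq : q = a
      · rw [hq, hσa]
        rcases w with r | bf'
        · by_cases hr : r = a
          · rw [hr, hσa, cfgE_ll, cfgE_xx]
            simp [haa]
          · rw [hσo r hr, cfgE_ll, cfgE_xl]
            constructor
            · rintro ⟨h1, h2, h3⟩
              rcases hout r h1 with h | h
              · exact h
              · exact absurd (show (a, r) = (a, d) by rw [h]) h3
            · intro h
              rw [h]
              exact ⟨hab, fun hc => hpa' (prod_fst_eq hc).symm,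
                fun hc => hbd (prod_snd_eq hc)⟩
        · rcases bf' with _ | _
          · rw [hσx, cfgE_lx, cfgE_xl]
            constructor
            · intro h; exact absurd h.symm hpa'
            · intro h; exact absurd h hab'
          · rw [hσy, cfgE_ly, cfgE_xy]
            simp
      · rw [hσo q hq]
        rcases w with r | bf'
        · by_cases hr : r = a
          · rw [hr, hσa, cfgE_ll, cfgE_lx]
            constructor
            · rintro ⟨h1, h2, h3⟩
              exact absurd (show (q, a) = (p, a) by rw [hin q h1]) h2
            · intro h; exact absurd h hq
          · rw [hσo r hr, cfgE_ll, cfgE_ll]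
            constructor
            · rintro ⟨h1, h2, h3⟩
              exact ⟨h1, fun hc => hq (prod_fst_eq hc),
                fun hc => hq (prod_fst_eq hc)⟩
            · rintro ⟨h1, h2, h3⟩
              exact ⟨h1, fun hc => hr (prod_snd_eq hc),
                fun hc => hq (prod_fst_eq hc)⟩
        · rcases bf' with _ | _
          · rw [hσx, cfgE_lx, cfgE_ll]
            constructor
            · intro h
              rw [h]
              exact ⟨hpa, fun hc => hpa' (prod_fst_eq hc),
                fun hc => hpa' (prod_fst_eq hc)⟩
            · rintro ⟨h1, h2, h3⟩
              exact hin q h1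
          · rw [hσy, cfgE_ly, cfgE_ly]
    · rcases bf with _ | _
      · rw [hσx]
        rcases w with r | bf'
        · by_cases hr : r = a
          · rw [hr, hσa, cfgE_xl, cfgE_lx]
          · rw [hσo r hr, cfgE_xl, cfgE_ll]
            constructor
            · intro h; exact absurd h hr
            · rintro ⟨h1, h2, h3⟩
              exfalso
              rcases hout r h1 with h | h
              · exact h2 (show (a, r) = (a, b) by rw [h])
              · exact h3 (show (a, r) = (a, d) by rw [h])
        · rcases bf' with _ | _
          · rw [hσx, cfgE_xx, cfgE_ll]
            constructor
            · exact False.elim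
            · rintro ⟨h1, -⟩; exact haa h1
          · rw [hσy, cfgE_xy, cfgE_ly]
            simp
      · rw [hσy]
        rcases w with r | bf'
        · by_cases hr : r = a
          · rw [hr, hσa, cfgE_yl, cfgE_yx]
            constructor
            · intro h; exact absurd h had'
            · exact False.elim
          · rw [hσo r hr, cfgE_yl, cfgE_yl]
        · rcases bf' with _ | _
          · rw [hσx, cfgE_yx, cfgE_yl]
            constructor
            · exact False.elim
            · intro h; exact absurd h had'
          · rw [hσy, cfgE_yy, cfgE_yy]
  · intro z
    show σ (inl (T.lab z)) = inl (T.lab z)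
    exact hσo _ (lab_ne_of_edge hT had z)

end Triangle
section Conn

open Relation Sum

variable {X : Type} {T : Net X}

lemma netIso_symm {A B : Net X} (h : NetIso A B) : NetIso B A := by
  obtain ⟨φ, hE, hlab⟩ := h
  refine ⟨φ.symm, ?_, ?_⟩
  · intro u v
    rw [hE (φ.symm u) (φ.symm v), Equiv.apply_symm_apply, Equiv.apply_symm_apply]
  · intro x
    rw [← hlab x, Equiv.symm_apply_apply]

lemma conn_of_iso {A B : Net X} (h : NetIso A B) : ConnectedBy HeadMoveStep A B :=
  ReflTransGen.single (Or.inr h)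

lemma notRTG_sib {a d : T.V} (hacyc : Acyclic T.E) (had : T.E a d) :
    ¬ Relation.ReflTransGen T.E d a :=
  fun h => hacyc a (Relation.TransGen.head' had h)

lemma notRTG_up {p a d : T.V} (hacyc : Acyclic T.E) (hpa : T.E p a) (had : T.E a d) :
    ¬ Relation.ReflTransGen T.E d p :=
  fun h => hacyc a (Relation.TransGen.head' had (h.tail hpa))

lemma ok_sib (hacyc : Acyclic T.E) {a b d : T.V} (hab : T.E a b) (had : T.E a d)
    (hbd : b ≠ d) : Ok T a b a d :=
  ⟨hab, had, fun hc => hbd (prod_snd_eq hc), notRTG_sib hacyc had⟩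

lemma ok_up (hacyc : Acyclic T.E) {p a d : T.V} (hpa : T.E p a) (had : T.E a d) :
    Ok T p a a d :=
  ⟨hpa, had, fun hc => (acyclic_ne hacyc hpa) (prod_fst_eq hc),
    notRTG_up hacyc hpa had⟩

lemma conn_head (hT : IsTree T) {a b s t s' t' : T.V} (hok : Ok T a b s t)
    (hok' : Ok T a b s' t') :
    ConnectedBy HeadMoveStep (CfgNet T a b s t) (CfgNet T a b s' t') := by
  by_cases h : (s, t) = (s', t')
  · rw [show s = s' from congrArg Prod.fst h, show t = t' from congrArg Prod.snd h]
    exact ReflTransGen.refl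
  · exact ReflTransGen.single (Or.inl (head_jump hT hok hok' h))

lemma tree_cases (hT : IsTree T) {a b : T.V} (hab : T.E a b) :
    IsRoot T.E a ∨ (IsSplit T.E a ∧ ∃ p, T.E p a) := by
  rcases tree_types hT a with h | h | h
  · exact Or.inl h
  · exfalso
    have h3 : 1 ≤ Nat.card {w // T.E a w} := card_pos_of_exists hab
    have h2 : Nat.card {w // T.E a w} = 0 := h.2
    omega
  · refine Or.inr ⟨h, ?_⟩
    have h1 : Nat.card {u // T.E u a} = 1 := h.1
    exact (card_one_unique h1).1

lemma parent_unique (hsplit : IsSplit T.E a) {p : T.V} (hpa : T.E p a) :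
    ∀ q, T.E q a → q = p := by
  intro q hq
  have h1 : Nat.card {u // T.E u a} = 1 := hsplit.1
  exact (card_one_unique h1).2 q p hq hpa

lemma two_nbrs (h2 : outdeg T.E a = 2) {b b' : T.V} (hb : T.E a b) (hb' : T.E a b')
    (hne : b ≠ b') : ∀ q, T.E a q → q = b ∨ q = b' := by
  have h2' : Nat.card {w // T.E a w} = 2 := h2
  obtain ⟨v, w, hvw, -, -, huniv⟩ := card_two_exists h2'
  intro q hq
  rcases huniv b hb with hbv | hbw <;> rcases huniv b' hb' with hb'v | hb'w
  · exact absurd (hbv.trans hb'v.symm) hne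
  · rcases huniv q hq with h | h
    · exact Or.inl (h.trans hbv.symm)
    · exact Or.inr (h.trans hb'w.symm)
  · rcases huniv q hq with h | h
    · exact Or.inr (h.trans hb'v.symm)
    · exact Or.inl (h.trans hbw.symm)
  · exact absurd (hbw.trans hb'w.symm) hne

lemma other_child (h2 : outdeg T.E a = 2) {b : T.V} (hb : T.E a b) :
    ∃ d, T.E a d ∧ d ≠ b := by
  have h2' : Nat.card {w // T.E a w} = 2 := h2
  obtain ⟨v, w, hvw, hv, hw, huniv⟩ := card_two_exists h2'
  rcases huniv b hb with h | h
  · exact ⟨w, hw, fun hc => hvw (h.symm.trans hc.symm)⟩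
  · exact ⟨v, hv, fun hc => hvw (hc.trans h)⟩

lemma root_child_unique (hroot : IsRoot T.E a) {b b' : T.V} (hb : T.E a b)
    (hb' : T.E a b') : b = b' := by
  have h1 : Nat.card {w // T.E a w} = 1 := hroot.2
  exact (card_one_unique h1).2 b b' hb hb'

lemma aCount_zero_root (hT : IsTree T) {a b : T.V} (hab : T.E a b)
    (h0 : aCount T.E a = 0) : IsRoot T.E a := by
  rcases tree_cases hT hab with h | ⟨-, p, hp⟩
  · exact h
  · exfalso
    have : p ∈ {u | Relation.TransGen T.E u a} := Relation.TransGen.single hp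
    have he : ({u | Relation.TransGen T.E u a} : Set T.V) = ∅ :=
      Set.ncard_eq_zero (Set.toFinite _) |>.mp h0
    rw [he] at this
    exact this

lemma conn_tails (hT : IsTree T) : ∀ (n : ℕ) (a b s t a' b' s' t' : T.V),
    aCount T.E a + aCount T.E a' ≤ n → Ok T a b s t → Ok T a' b' s' t' →
    ConnectedBy HeadMoveStep (CfgNet T a b s t) (CfgNet T a' b' s' t') := by
  have hacyc := hT.1.acyclic
  intro n
  induction n with
  | zero =>
    intro a b s t a' b' s' t' hn hok hok'
    have hra : IsRoot T.E a := aCount_zero_root hT hok.1 (by omega)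
    have hra' : IsRoot T.E a' := aCount_zero_root hT hok'.1 (by omega)
    obtain ⟨ρ, -, hu⟩ := hT.1.root_unique
    have haa' : a = a' := (hu a hra).trans (hu a' hra').symm
    subst haa'
    have hbb' : b = b' := root_child_unique hra hok.1 hok'.1
    subst hbb'
    exact conn_head hT hok hok'
  | succ n ih =>
    intro a b s t a' b' s' t' hn hok hok'
    by_cases haa' : a = a'
    · subst haa'
      by_cases hbb' : b = b'
      · subst hbb'
        exact conn_head hT hok hok'
      · -- sibling swap
        rcases tree_cases hT hok.1 with hroot | ⟨hsplit, p, hpa⟩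
        · exact absurd (root_child_unique hroot hok.1 hok'.1) hbb'
        · have hab := hok.1
          have hab' := hok'.1
          have hin := parent_unique hsplit hpa
          have hout : ∀ q, T.E a q → q = b ∨ q = b' :=
            two_nbrs hsplit.2 hab hab' hbb'
          have hout' : ∀ q, T.E a q → q = b' ∨ q = b := by
            intro q hq; exact (hout q hq).symm
          have okbb' : Ok T a b a b' := ok_sib hacyc hab hab' hbb'
          have okb'b : Ok T a b' a b := ok_sib hacyc hab' hab (Ne.symm hbb')
          have okp1 : Ok T p a a b' := ok_up hacyc hpa hab'
          have okp2 : Ok T p a a b := ok_up hacyc hpa hab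
          refine ReflTransGen.trans (conn_head hT hok okbb') ?_
          refine ReflTransGen.trans (conn_of_iso (netIso_symm
            (triangle_iso hT hpa hab hab' hbb' hin hout))) ?_
          refine ReflTransGen.trans (conn_head hT okp1 okp2) ?_
          refine ReflTransGen.trans (conn_of_iso
            (triangle_iso hT hpa hab' hab (Ne.symm hbb') hin hout')) ?_
          exact conn_head hT okb'b hok'
    · rcases tree_cases hT hok.1 with hroot | ⟨hsplit, p, hpa⟩
      · -- a is the root; climb on the right side
        rcases tree_cases hT hok'.1 with hroot' | ⟨hsplit', p', hpa'⟩
        · obtain ⟨ρ, -, hu⟩ := hT.1.root_unique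
          exact absurd ((hu a hroot).trans (hu a' hroot').symm) haa'
        · have hab' := hok'.1
          obtain ⟨d', hd', hd'b'⟩ := other_child hsplit'.2 hab'
          have hin' := parent_unique hsplit' hpa'
          have hout' : ∀ q, T.E a' q → q = b' ∨ q = d' :=
            two_nbrs hsplit'.2 hab' hd' (Ne.symm hd'b')
          have okup : Ok T p' a' a' d' := ok_up hacyc hpa' hd'
          have oksib : Ok T a' b' a' d' := ok_sib hacyc hab' hd' (Ne.symm hd'b')
          have hcount : aCount T.E a + aCount T.E p' ≤ n := by
            have := aCount_lt hacyc hpa'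
            omega
          refine ReflTransGen.trans (ih a b s t p' a' a' d' hcount hok okup) ?_
          refine ReflTransGen.trans (conn_of_iso
            (triangle_iso hT hpa' hab' hd' hd'b'.symm hin' hout')) ?_
          exact conn_head hT oksib hok'
      · -- climb on the left side
        have hab := hok.1
        obtain ⟨d, hd, hdb⟩ := other_child hsplit.2 hab
        have hin := parent_unique hsplit hpa
        have hout : ∀ q, T.E a q → q = b ∨ q = d :=
          two_nbrs hsplit.2 hab hd (Ne.symm hdb)
        have okup : Ok T p a a d := ok_up hacyc hpa hd
        have oksib : Ok T a b a d := ok_sib hacyc hab hd (Ne.symm hdb)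
        have hcount : aCount T.E p + aCount T.E a' ≤ n := by
          have := aCount_lt hacyc hpa
          omega
        refine ReflTransGen.trans (conn_head hT hok oksib) ?_
        refine ReflTransGen.trans (conn_of_iso (netIso_symm
          (triangle_iso hT hpa hab hd hdb.symm hin hout))) ?_
        exact ih p a a d a' b' s' t' hcount okup hok'

end Conn
section Walks

open Relation Sum

variable {X : Type} {N T : Net X} {E' : N.V → N.V → Prop} {φ : T.V → N.V}

lemma card_two_mem {V : Type} {P : V → Prop} (h2 : Nat.card {v // P v} = 2)
    {b b' : V} (hb : P b) (hb' : P b') (hne : b ≠ b') : ∀ q, P q → q = b ∨ q = b' := by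
  obtain ⟨v, w, hvw, -, -, huniv⟩ := card_two_exists h2
  intro q hq
  rcases huniv b hb with hbv | hbw <;> rcases huniv b' hb' with hb'v | hb'w
  · exact absurd (hbv.trans hb'v.symm) hne
  · rcases huniv q hq with h | h
    · exact Or.inl (h.trans hbv.symm)
    · exact Or.inr (h.trans hb'w.symm)
  · rcases huniv q hq with h | h
    · exact Or.inr (h.trans hb'v.symm)
    · exact Or.inl (h.trans hbw.symm)
  · exact absurd (hbw.trans hb'w.symm) hne

lemma exists_extra {V : Type} [Finite V] {P Q : V → Prop} (h : ∀ v, P v → Q v)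
    (hc : Nat.card {v // P v} < Nat.card {v // Q v}) : ∃ v, Q v ∧ ¬ P v := by
  by_contra hc'
  push_neg at hc'
  have := card_le_of_imp hc'
  omega

lemma chain_cons_iff {V : Type} {r : V → V → Prop} {a b : V} {l : List V} :
    List.Chain r a (b :: l) ↔ r a b ∧ List.Chain r b l := List.isChain_cons_cons

lemma chain_last {V : Type} {r : V → V → Prop} :
    ∀ (l : List V) {x b : V}, List.Chain r x (l ++ [b]) → ∃ z, r z b := by
  intro l
  induction l with
  | nil => intro x b h; rw [List.nil_append, chain_cons_iff] at h; exact ⟨x, h.1⟩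
  | cons w l' ih =>
    intro x b h
    rw [List.cons_append, chain_cons_iff] at h
    exact ih h.2

lemma chain_transGen {V : Type} {r : V → V → Prop} :
    ∀ (l : List V) {x b : V}, List.Chain r x (l ++ [b]) → Relation.TransGen r x b := by
  intro l
  induction l with
  | nil => intro x b h; rw [List.nil_append, chain_cons_iff] at h
           exact Relation.TransGen.single h.1
  | cons w l' ih =>
    intro x b h
    rw [List.cons_append, chain_cons_iff] at h
    exact Relation.TransGen.head h.1 (ih h.2)

lemma succ_unique (hdeg : ∀ v, v ∉ Set.range φ → indeg E' v = 1 ∧ outdeg E' v = 1)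
    {v : N.V} (hv : v ∉ Set.range φ) : ∀ z z', E' v z → E' v z' → z = z' := by
  have h1 : Nat.card {w // E' v w} = 1 := (hdeg v hv).2
  exact (card_one_unique h1).2

lemma pred_unique (hdeg : ∀ v, v ∉ Set.range φ → indeg E' v = 1 ∧ outdeg E' v = 1)
    {v : N.V} (hv : v ∉ Set.range φ) : ∀ z z', E' z v → E' z' v → z = z' := by
  have h1 : Nat.card {w // E' w v} = 1 := (hdeg v hv).1
  exact (card_one_unique h1).2

lemma walk_exists (hNac : Acyclic N.E) (hE'N : ∀ a b, E' a b → N.E a b)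
    (hdeg : ∀ v, v ∉ Set.range φ → indeg E' v = 1 ∧ outdeg E' v = 1) :
    ∀ z, z ∉ Set.range φ → ∃ (b : T.V) (l : List N.V),
      List.Chain E' z (l ++ [φ b]) ∧ ∀ x ∈ l, x ∉ Set.range φ := by
  have wf := acyclic_wf_flip hNac
  intro z
  induction z using WellFounded.induction wf with
  | _ v ih =>
    intro hv
    have h1 : Nat.card {w // E' v w} = 1 := (hdeg v hv).2
    obtain ⟨w, hw⟩ := (card_one_unique h1).1
    by_cases hw' : w ∈ Set.range φ
    · obtain ⟨b, rfl⟩ := hw'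
      exact ⟨b, [], List.Chain.cons hw List.Chain.nil, by simp⟩
    · obtain ⟨b, l, hch, hl⟩ := ih w (hE'N _ _ hw) hw'
      refine ⟨b, w :: l, List.Chain.cons hw hch, ?_⟩
      intro x hx
      rcases List.mem_cons.mp hx with h | h
      · rw [h]; exact hw'
      · exact hl x h

lemma detF (hdeg : ∀ v, v ∉ Set.range φ → indeg E' v = 1 ∧ outdeg E' v = 1) :
    ∀ (l₁ : List N.V) {z : N.V} (l₂ : List N.V) {b₁ b₂ : T.V},
    z ∉ Set.range φ →
    List.Chain E' z (l₁ ++ [φ b₁]) → (∀ x ∈ l₁, x ∉ Set.range φ) →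
    List.Chain E' z (l₂ ++ [φ b₂]) → (∀ x ∈ l₂, x ∉ Set.range φ) →
    l₁ = l₂ ∧ φ b₁ = φ b₂ := by
  intro l₁
  induction l₁ with
  | nil =>
    intro z l₂ b₁ b₂ hz h1 hl1 h2 hl2
    rw [List.nil_append, chain_cons_iff] at h1
    have e1 : E' z (φ b₁) := h1.1
    cases l₂ with
    | nil =>
      rw [List.nil_append, chain_cons_iff] at h2
      exact ⟨rfl, succ_unique hdeg hz _ _ e1 h2.1⟩
    | cons w l' =>
      rw [List.cons_append, chain_cons_iff] at h2
      have e2 : E' z w := h2.1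
      have hw : φ b₁ = w := succ_unique hdeg hz _ _ e1 e2
      exact absurd ⟨b₁, hw⟩ (hl2 w (List.mem_cons_self))
  | cons w₁ l₁' ih =>
    intro z l₂ b₁ b₂ hz h1 hl1 h2 hl2
    rw [List.cons_append, chain_cons_iff] at h1
    cases l₂ with
    | nil =>
      rw [List.nil_append, chain_cons_iff] at h2
      have hw : φ b₂ = w₁ := succ_unique hdeg hz _ _ h2.1 h1.1
      exact absurd ⟨b₂, hw⟩ (hl1 w₁ (List.mem_cons_self))
    | cons w₂ l₂' =>
      rw [List.cons_append, chain_cons_iff] at h2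
      have hw : w₁ = w₂ := succ_unique hdeg hz _ _ h1.1 h2.1
      have hw₁ : w₁ ∉ Set.range φ := hl1 w₁ (List.mem_cons_self)
      have := ih (z := w₁) l₂' hw₁ h1.2
        (fun x hx => hl1 x (List.mem_cons_of_mem _ hx))
        (by rw [hw]; exact h2.2)
        (fun x hx => hl2 x (List.mem_cons_of_mem _ hx))
      exact ⟨by rw [hw, this.1], this.2⟩

/-- `z` is the first vertex of a chain realizing the tree edge from `u` to `b`. -/
def EdgeTo (E' : N.V → N.V → Prop) (φ : T.V → N.V) (u : T.V) (z : N.V) (b : T.V) :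
    Prop :=
  E' (φ u) z ∧ (z = φ b ∨ (z ∉ Set.range φ ∧
    ∃ l, List.Chain E' z (l ++ [φ b]) ∧ ∀ x ∈ l, x ∉ Set.range φ))

lemma edgeTo_fn (hdeg : ∀ v, v ∉ Set.range φ → indeg E' v = 1 ∧ outdeg E' v = 1)
    {u : T.V} {z : N.V} {b₁ b₂ : T.V} (h1 : EdgeTo E' φ u z b₁)
    (h2 : EdgeTo E' φ u z b₂) : φ b₁ = φ b₂ := by
  rcases h1.2 with e1 | ⟨hz1, l₁, hc1, hi1⟩ <;> rcases h2.2 with e2 | ⟨hz2, l₂, hc2, hi2⟩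
  · rw [← e1, e2]
  · exact absurd ⟨b₁, e1.symm⟩ hz2
  · exact absurd ⟨b₂, e2.symm⟩ hz1
  · exact (detF hdeg l₁ l₂ hz1 hc1 hi1 hc2 hi2).2

lemma F_to_edgeTo
    (hchain : ∀ a b, T.E a b ↔ ∃ l : List N.V,
      List.Chain E' (φ a) (l ++ [φ b]) ∧ ∀ x ∈ l, x ∉ Set.range φ)
    {u b : T.V} (h : T.E u b) : ∃ z, EdgeTo E' φ u z b := by
  obtain ⟨l, hc, hi⟩ := (hchain u b).mp h
  cases l with
  | nil =>
    rw [List.nil_append, chain_cons_iff] at hc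
    exact ⟨φ b, hc.1, Or.inl rfl⟩
  | cons w l' =>
    rw [List.cons_append, chain_cons_iff] at hc
    exact ⟨w, hc.1, Or.inr ⟨hi w (List.mem_cons_self), l', hc.2,
      fun x hx => hi x (List.mem_cons_of_mem _ hx)⟩⟩

lemma edgeTo_F
    (hchain : ∀ a b, T.E a b ↔ ∃ l : List N.V,
      List.Chain E' (φ a) (l ++ [φ b]) ∧ ∀ x ∈ l, x ∉ Set.range φ)
    {u b : T.V} {z : N.V} (h : EdgeTo E' φ u z b) : T.E u b := by
  rcases h.2 with e | ⟨hz, l, hc, hi⟩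
  · refine (hchain u b).mpr ⟨[], ?_, by simp⟩
    rw [List.nil_append]
    exact List.Chain.cons (e ▸ h.1) List.Chain.nil
  · refine (hchain u b).mpr ⟨z :: l, List.Chain.cons h.1 hc, ?_⟩
    intro x hx
    rcases List.mem_cons.mp hx with hh | hh
    · rw [hh]; exact hz
    · exact hi x hh

end Walks
section Structure

open Relation Sum

variable {X : Type}

lemma structure_thm {N T : Net X} (hN : N.valid) (h1 : reticCount N.E = 1)
    (hTN : EmbeddedTree T N) :
    ∃ a b s t, Ok T a b s t ∧ NetIso (CfgNet T a b s t) N := by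
  classical
  obtain ⟨hT, E', φ, hE'N, ⟨hinj, hdeg, hchain⟩, hlab⟩ := hTN
  have hNac : Acyclic N.E := hN.acyclic
  have hTac : Acyclic T.E := hT.1.acyclic
  have hin_le : ∀ v, indeg E' v ≤ indeg N.E v :=
    fun v => card_le_of_imp (fun u h => hE'N u v h)
  have hout_le : ∀ v, outdeg E' v ≤ outdeg N.E v :=
    fun v => card_le_of_imp (fun u h => hE'N v u h)
  have hNout2 : ∀ v, outdeg N.E v ≤ 2 := by
    intro v
    rcases hN.node_types v with h | h | h | h <;>
      first
        | (have := h.2; omega)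
  have hNin2 : ∀ v, indeg N.E v ≤ 2 := by
    intro v
    rcases hN.node_types v with h | h | h | h <;>
      first
        | (have := h.1; omega)
  obtain ⟨ρ, hρ, hρu⟩ := hN.root_unique
  obtain ⟨rT, hrT, hrTu⟩ := hT.1.root_unique
  have hchain_in : ∀ q u, T.E u q → 1 ≤ indeg E' (φ q) := by
    intro q u h
    obtain ⟨l, hc, -⟩ := (hchain u q).mp h
    obtain ⟨z, hz⟩ := chain_last l hc
    exact card_pos_of_exists hz
  have hρR : ρ ∈ Set.range φ := by
    by_contra h
    have h1' := (hdeg ρ h).1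
    have h2 := hin_le ρ
    have h3 : indeg N.E ρ = 0 := hρ.1
    omega
  obtain ⟨w₀, hw₀⟩ := hρR
  have hw₀root : IsRoot T.E w₀ := by
    rcases tree_types hT w₀ with h | h | h
    · exact h
    all_goals
      exfalso
      have h1' : Nat.card {u // T.E u w₀} = 1 := h.1
      obtain ⟨u, hu⟩ := (card_one_unique h1').1
      have h2 := hchain_in w₀ u hu
      have h3 := hin_le (φ w₀)
      rw [hw₀] at h2 h3
      have h4 : indeg N.E ρ = 0 := hρ.1
      omega
  have hφrT : φ rT = ρ := by
    rw [← hrTu w₀ hw₀root]; exact hw₀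
  have hleafN : ∀ q, IsLeafNode T.E q → IsLeafNode N.E (φ q) := by
    intro q h
    obtain ⟨z, hz⟩ := (hT.1.leaf_iff q).mp h
    exact (hN.leaf_iff (φ q)).mpr ⟨z, by rw [← hlab z, hz]⟩
  have hno2 : ∀ (u : T.V) (z₁ z₂ : N.V) (b : T.V), z₁ ≠ z₂ →
      EdgeTo E' φ u z₁ b → EdgeTo E' φ u z₂ b → False := by
    intro u z₁ z₂ b hne h1' h2'
    rcases tree_types hT u with h | h | h
    · have hc2 : 2 ≤ Nat.card {w // N.E (φ u) w} :=
        card_ge_two (hE'N _ _ h1'.1) (hE'N _ _ h2'.1) hne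
      have hc2' : 2 ≤ outdeg N.E (φ u) := hc2
      have : outdeg N.E (φ u) = 1 := by rw [hrTu u h, hφrT]; exact hρ.2
      omega
    · have h0 : outdeg N.E (φ u) = 0 := (hleafN u h).2
      have hc1 : 1 ≤ Nat.card {w // N.E (φ u) w} := card_pos_of_exists (hE'N _ _ h1'.1)
      have hc1' : 1 ≤ outdeg N.E (φ u) := hc1
      omega
    · have hb : T.E u b := edgeTo_F hchain h1'
      obtain ⟨b₂, hb₂, hb₂b⟩ := other_child h.2 hb
      obtain ⟨z₃, h3'⟩ := F_to_edgeTo hchain hb₂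
      have hz31 : z₃ ≠ z₁ := fun hc =>
        hb₂b (hinj (edgeTo_fn hdeg (hc ▸ h3') h1'))
      have hz32 : z₃ ≠ z₂ := fun hc =>
        hb₂b (hinj (edgeTo_fn hdeg (hc ▸ h3') h2'))
      have hc3 : 3 ≤ Nat.card {w // N.E (φ u) w} :=
        card_ge_three (hE'N _ _ h3'.1) (hE'N _ _ h1'.1) (hE'N _ _ h2'.1) hz31 hz32 hne
      have hc3' : 3 ≤ outdeg N.E (φ u) := hc3
      have := hNout2 (φ u)
      omega
  have houtE' : ∀ u, outdeg E' (φ u) = outdeg T.E u := by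
    intro u
    have hinj2 : Function.Injective (fun (q : {q // T.E u q}) =>
        (⟨Classical.choose (F_to_edgeTo hchain q.2),
          (Classical.choose_spec (F_to_edgeTo hchain q.2)).1⟩ : {z // E' (φ u) z})) := by
      intro q1 q2 hq
      have e1 := Classical.choose_spec (F_to_edgeTo hchain q1.2)
      have e2 := Classical.choose_spec (F_to_edgeTo hchain q2.2)
      have hv : Classical.choose (F_to_edgeTo hchain q1.2) =
          Classical.choose (F_to_edgeTo hchain q2.2) := congrArg Subtype.val hq
      rw [hv] at e1
      exact Subtype.ext (hinj (edgeTo_fn hdeg e1 e2))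
    have hge : outdeg T.E u ≤ outdeg E' (φ u) :=
      Nat.card_le_card_of_injective _ hinj2
    rcases tree_types hT u with h | h | h
    · have h2 : outdeg T.E u = 1 := h.2
      have h3 : outdeg N.E (φ u) = 1 := by rw [hrTu u h, hφrT]; exact hρ.2
      have := hout_le (φ u); omega
    · have h0 : outdeg N.E (φ u) = 0 := (hleafN u h).2
      have := hout_le (φ u); have h2 : outdeg T.E u = 0 := h.2; omega
    · have h2 : outdeg T.E u = 2 := h.2
      have := hout_le (φ u); have := hNout2 (φ u); omega
  have h1' : Nat.card {v // IsRetic N.E v} = 1 := h1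
  have hcu := card_one_unique h1'
  obtain ⟨y, hy⟩ := hcu.1
  have hyu := hcu.2
  have hyR : y ∉ Set.range φ := by
    rintro ⟨u, rfl⟩
    rcases tree_types hT u with h | h | h
    · have h2 : indeg N.E (φ u) = 2 := hy.1
      rw [hrTu u h, hφrT] at h2
      have h3 : indeg N.E ρ = 0 := hρ.1
      omega
    · have h2 := (hleafN u h).2
      have h3 : outdeg N.E (φ u) = 1 := hy.2
      omega
    · have h2 := houtE' u
      have h3 : outdeg T.E u = 2 := h.2
      have h4 := hout_le (φ u)
      have h5 : outdeg N.E (φ u) = 1 := hy.2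
      omega
  have hinE' : ∀ q, indeg E' (φ q) = indeg N.E (φ q) := by
    intro q
    rcases tree_types hT q with h | h | h
    · have h0 : indeg N.E (φ q) = 0 := by rw [hrTu q h, hφrT]; exact hρ.1
      have := hin_le (φ q); omega
    · have h0 : indeg N.E (φ q) = 1 := (hleafN q h).1
      have h1'' : Nat.card {u // T.E u q} = 1 := h.1
      obtain ⟨u, hu⟩ := (card_one_unique h1'').1
      have := hchain_in q u hu
      have := hin_le (φ q); omega
    · have h1'' : Nat.card {u // T.E u q} = 1 := h.1
      obtain ⟨u, hu⟩ := (card_one_unique h1'').1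
      have hge1 := hchain_in q u hu
      have hout2 : outdeg E' (φ q) = 2 := by rw [houtE' q]; exact h.2
      have hout2' := hout_le (φ q)
      rcases hN.node_types (φ q) with hh | hh | hh | hh
      · have := hin_le (φ q); have := hh.1; omega
      · have := hh.2; omega
      · have := hh.1; have := hin_le (φ q); omega
      · exact absurd ⟨q, hyu (φ q) y hh hy⟩ hyR
  have hextra_head : ∀ v w, N.E v w → ¬ E' v w → w = y := by
    intro v w hvw hne
    by_cases hw : w ∈ Set.range φ
    · obtain ⟨q, rfl⟩ := hw
      have heq := hinE' q
      have hall : ∀ u, N.E u (φ q) → E' u (φ q) :=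
        eq_of_imp_of_card_le (fun u h => hE'N u _ h) (le_of_eq heq.symm)
      exact absurd (hall v hvw) hne
    · have hdw := (hdeg w hw).1
      have hlt : indeg E' w < indeg N.E w := by
        rcases Nat.lt_or_ge (indeg E' w) (indeg N.E w) with h | h
        · exact h
        · exfalso
          have hall : ∀ u, N.E u w → E' u w :=
            eq_of_imp_of_card_le (fun u h => hE'N u _ h) h
          exact hne (hall v hvw)
      rcases hN.node_types w with hh | hh | hh | hh
      · have := hin_le w; have := hh.1; omega
      · have := hh.1; omega
      · have := hh.1; omega
      · exact hyu w y hh hy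
  have houtN : ∀ u, outdeg N.E (φ u) = outdeg T.E u := by
    intro u
    rcases tree_types hT u with h | h | h
    · have h3 : outdeg N.E (φ u) = 1 := by rw [hrTu u h, hφrT]; exact hρ.2
      have h2 : outdeg T.E u = 1 := h.2
      omega
    · have h3 := (hleafN u h).2; have h2 : outdeg T.E u = 0 := h.2; omega
    · have := houtE' u; have := hout_le (φ u); have := hNout2 (φ u)
      have h2 : outdeg T.E u = 2 := h.2; omega
  have hextra_tail : ∀ (u : T.V) (z : N.V), N.E (φ u) z → E' (φ u) z := by
    intro u
    exact eq_of_imp_of_card_le (fun z h => hE'N _ _ h)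
      (le_of_eq (show outdeg N.E (φ u) = outdeg E' (φ u) by rw [houtN u, houtE' u]))
  have hyin2 : indeg N.E y = 2 := hy.1
  have hyinE : Nat.card {u // E' u y} = 1 := (hdeg y hyR).1
  have hcu2 := card_one_unique hyinE
  obtain ⟨sY, hsY⟩ := hcu2.1
  have hsYu : ∀ z, E' z y → z = sY := fun z hz => hcu2.2 z sY hz hsY
  obtain ⟨x, hxy, hxsY⟩ : ∃ x, N.E x y ∧ x ≠ sY := by
    have h2 : Nat.card {u // N.E u y} = 2 := hyin2
    obtain ⟨v, w, hvw, hv, hw, -⟩ := card_two_exists h2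
    rcases card_two_mem h2 hv hw hvw sY (hE'N _ _ hsY) with h | h
    · exact ⟨w, hw, fun hc => hvw (by rw [← h, ← hc])⟩
    · exact ⟨v, hv, fun hc => hvw (by rw [hc, h])⟩
  have hxE' : ¬ E' x y := fun h => hxsY (hsYu x h)
  have hxR : x ∉ Set.range φ := by
    rintro ⟨u, rfl⟩
    exact hxE' (hextra_tail u y hxy)
  have hxy_ne : x ≠ y := fun h => hNac x (Relation.TransGen.single (h ▸ hxy))
  have hxdeg := hdeg x hxR
  have hxsplit : IsSplit N.E x := by
    rcases hN.node_types x with hh | hh | hh | hh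
    · have := hin_le x; have := hh.1; have := hxdeg.1; omega
    · have := hout_le x; have := hh.2; have := hxdeg.2; omega
    · exact hh
    · exact absurd (hyu x y hh hy) hxy_ne
  have hnonrange : ∀ v, v ∉ Set.range φ → v = x ∨ v = y := by
    intro v hv
    rcases hN.node_types v with hh | hh | hh | hh
    · exfalso; have := (hdeg v hv).1; have := hin_le v; have := hh.1; omega
    · exfalso; have := (hdeg v hv).2; have := hout_le v; have := hh.2; omega
    · left
      have hvd : Nat.card {w // E' v w} = 1 := (hdeg v hv).2
      obtain ⟨h', hh1, hh2⟩ : ∃ h', N.E v h' ∧ ¬ E' v h' := by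
        refine exists_extra (fun w h => hE'N _ _ h) ?_
        have h2 : Nat.card {w // N.E v w} = 2 := hh.2
        omega
      have hhy : h' = y := hextra_head v h' hh1 hh2
      have h2 : Nat.card {u // N.E u y} = 2 := hyin2
      rcases card_two_mem h2 (hE'N _ _ hsY) hxy (Ne.symm hxsY) v (hhy ▸ hh1) with h | h
      · exfalso; apply hh2; rw [h, hhy]; exact hsY
      · exact h
    · exact Or.inr (hyu v y hh hy)
  -- neighbours of x and y
  have hxout1 : Nat.card {w // E' x w} = 1 := hxdeg.2
  obtain ⟨bx, hbx⟩ := (card_one_unique hxout1).1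
  have hbxR : bx ∈ Set.range φ := by
    by_contra h
    rcases hnonrange bx h with h' | h'
    · exact hNac x (Relation.TransGen.single (hE'N _ _ (h' ▸ hbx)))
    · exact hxE' (h' ▸ hbx)
  obtain ⟨b, hb⟩ := hbxR
  have hxin1 : Nat.card {w // E' w x} = 1 := hxdeg.1
  obtain ⟨ax, hax⟩ := (card_one_unique hxin1).1
  have haxR : ax ∈ Set.range φ := by
    by_contra h
    rcases hnonrange ax h with h' | h'
    · exact hNac x (Relation.TransGen.single (hE'N _ _ (h' ▸ hax)))
    · exact hNac x ((Relation.TransGen.single hxy).tail (hE'N _ _ (h' ▸ hax)))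
  obtain ⟨a, ha⟩ := haxR
  have hyout1 : Nat.card {w // E' y w} = 1 := (hdeg y hyR).2
  obtain ⟨ty, hty⟩ := (card_one_unique hyout1).1
  have htyR : ty ∈ Set.range φ := by
    by_contra h
    rcases hnonrange ty h with h' | h'
    · exact hNac x ((Relation.TransGen.single hxy).tail (hE'N _ _ (h' ▸ hty)))
    · exact hNac y (Relation.TransGen.single (hE'N _ _ (h' ▸ hty)))
  obtain ⟨t, ht⟩ := htyR
  have hsYR : sY ∈ Set.range φ := by
    by_contra h
    rcases hnonrange sY h with h' | h'
    · exact hxE' (h' ▸ hsY)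
    · exact hNac y (Relation.TransGen.single (hE'N _ _ (h' ▸ hsY)))
  obtain ⟨s, hs⟩ := hsYR
  have hE'ax : E' (φ a) x := ha ▸ hax
  have hE'xb : E' x (φ b) := hb ▸ hbx
  have hE'sy : E' (φ s) y := hs ▸ hsY
  have hE'yt : E' y (φ t) := ht ▸ hty
  have hFab : T.E a b := by
    refine (hchain a b).mpr ⟨[x], ?_, ?_⟩
    · exact List.Chain.cons hE'ax (List.Chain.cons hE'xb List.Chain.nil)
    · intro z hz; rw [List.mem_singleton.mp hz]; exact hxR
  have hFst : T.E s t := by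
    refine (hchain s t).mpr ⟨[y], ?_, ?_⟩
    · exact List.Chain.cons hE'sy (List.Chain.cons hE'yt List.Chain.nil)
    · intro z hz; rw [List.mem_singleton.mp hz]; exact hyR
  have hpredx : ∀ z, E' z x → z = φ a :=
    fun z hz => (pred_unique hdeg hxR z ax hz hax).trans ha.symm
  have hsuccx : ∀ z, E' x z → z = φ b :=
    fun z hz => (succ_unique hdeg hxR z bx hz hbx).trans hb.symm
  have hpredy : ∀ z, E' z y → z = φ s :=
    fun z hz => (hsYu z hz).trans hs.symm
  have hsuccy : ∀ z, E' y z → z = φ t :=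
    fun z hz => (succ_unique hdeg hyR z ty hz hty).trans ht.symm
  have hETxb : EdgeTo E' φ a x b :=
    ⟨hE'ax, Or.inr ⟨hxR, [], List.Chain.cons hE'xb List.Chain.nil, by simp⟩⟩
  have hETy : EdgeTo E' φ s y t :=
    ⟨hE'sy, Or.inr ⟨hyR, [], List.Chain.cons hE'yt List.Chain.nil, by simp⟩⟩
  have hnd_ab : ¬ E' (φ a) (φ b) := fun h =>
    hno2 a (φ b) x b (fun hc => hxR ⟨b, hc⟩) ⟨h, Or.inl rfl⟩ hETxb
  have hnd_st : ¬ E' (φ s) (φ t) := fun h =>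
    hno2 s (φ t) y t (fun hc => hyR ⟨t, hc⟩) ⟨h, Or.inl rfl⟩ hETy
  have habst : (a, b) ≠ (s, t) := by
    intro h
    have e1 : a = s := prod_fst_eq h
    have e2 : b = t := prod_snd_eq h
    exact hno2 s x y t hxy_ne (by rw [← e1, ← e2]; exact hETxb) hETy
  have hlift : ∀ p q, T.E p q → Relation.TransGen N.E (φ p) (φ q) := by
    intro p q h
    obtain ⟨l, hc, -⟩ := (hchain p q).mp h
    exact chain_transGen l (List.Chain.imp (fun u v h => hE'N u v h) hc)
  have hRTGlift : ∀ p q, Relation.ReflTransGen T.E p q →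
      Relation.ReflTransGen N.E (φ p) (φ q) := by
    intro p q h
    induction h with
    | refl => exact Relation.ReflTransGen.refl
    | tail _ h ih => exact ih.trans (hlift _ _ h).to_reflTransGen
  have hcyc : ¬ Relation.ReflTransGen T.E t a := by
    intro h
    apply hNac x
    have h1'' : Relation.ReflTransGen N.E x (φ a) :=
      (((Relation.TransGen.single hxy).tail (hE'N _ _ hE'yt)).to_reflTransGen).trans
        (hRTGlift t a h)
    exact Relation.TransGen.tail' h1'' (hE'N _ _ hE'ax)
  have hOk : Ok T a b s t := ⟨hFab, hFst, habst, hcyc⟩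
  have hE'iff : ∀ v w, E' v w ↔
      ((∃ p q, v = φ p ∧ w = φ q ∧ T.E p q ∧ (p, q) ≠ (a, b) ∧ (p, q) ≠ (s, t)) ∨
       (v = φ a ∧ w = x) ∨ (v = x ∧ w = φ b) ∨ (v = φ s ∧ w = y) ∨ (v = y ∧ w = φ t)) := by
    intro v w
    constructor
    · intro h
      by_cases hv : v ∈ Set.range φ
      · obtain ⟨p, rfl⟩ := hv
        by_cases hw : w ∈ Set.range φ
        · obtain ⟨q, rfl⟩ := hw
          left
          refine ⟨p, q, rfl, rfl,
            (hchain p q).mpr ⟨[], List.Chain.cons h List.Chain.nil, by simp⟩, ?_, ?_⟩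
          · intro hpq
            have e1 : p = a := prod_fst_eq hpq
            have e2 : q = b := prod_snd_eq hpq
            rw [e1, e2] at h
            exact hnd_ab h
          · intro hpq
            have e1 : p = s := prod_fst_eq hpq
            have e2 : q = t := prod_snd_eq hpq
            rw [e1, e2] at h
            exact hnd_st h
        · rcases hnonrange w hw with rfl | rfl
          · exact Or.inr (Or.inl ⟨hpredx _ h, rfl⟩)
          · exact Or.inr (Or.inr (Or.inr (Or.inl ⟨hpredy _ h, rfl⟩)))
      · rcases hnonrange v hv with rfl | rfl
        · exact Or.inr (Or.inr (Or.inl ⟨rfl, hsuccx _ h⟩))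
        · exact Or.inr (Or.inr (Or.inr (Or.inr ⟨rfl, hsuccy _ h⟩)))
    · intro h
      rcases h with ⟨p, q, rfl, rfl, hpq, hne1, hne2⟩ | ⟨h1', h2'⟩ | ⟨h1', h2'⟩ |
        ⟨h1', h2'⟩ | ⟨h1', h2'⟩
      · obtain ⟨l, hc, hi⟩ := (hchain p q).mp hpq
        cases l with
        | nil =>
          rw [List.nil_append, chain_cons_iff] at hc
          exact hc.1
        | cons z l' =>
          exfalso
          rw [List.cons_append, chain_cons_iff] at hc
          have hz : z ∉ Set.range φ := hi z (List.mem_cons_self)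
          rcases hnonrange z hz with rfl | rfl
          · have hpa : φ p = φ a := hpredx _ hc.1
            cases l' with
            | nil =>
              have hc2 := hc.2
              rw [List.nil_append, chain_cons_iff] at hc2
              have hqb : φ q = φ b := hsuccx _ hc2.1
              apply hne1
              rw [Prod.ext_iff]
              exact ⟨hinj hpa, hinj hqb⟩
            | cons z' l'' =>
              have hc2 := hc.2
              rw [List.cons_append, chain_cons_iff] at hc2
              have : z' = φ b := hsuccx _ hc2.1
              exact hi z' (List.mem_cons_of_mem _ (List.mem_cons_self)) ⟨b, this.symm⟩
          · have hps : φ p = φ s := hpredy _ hc.1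
            cases l' with
            | nil =>
              have hc2 := hc.2
              rw [List.nil_append, chain_cons_iff] at hc2
              have hqt : φ q = φ t := hsuccy _ hc2.1
              apply hne2
              rw [Prod.ext_iff]
              exact ⟨hinj hps, hinj hqt⟩
            | cons z' l'' =>
              have hc2 := hc.2
              rw [List.cons_append, chain_cons_iff] at hc2
              have : z' = φ t := hsuccy _ hc2.1
              exact hi z' (List.mem_cons_of_mem _ (List.mem_cons_self)) ⟨t, this.symm⟩
      · rw [h1', h2']; exact hE'ax
      · rw [h1', h2']; exact hE'xb
      · rw [h1', h2']; exact hE'sy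
      · rw [h1', h2']; exact hE'yt
  have hNiff : ∀ v w, N.E v w ↔ (E' v w ∨ (v = x ∧ w = y)) := by
    intro v w
    constructor
    · intro h
      by_cases he : E' v w
      · exact Or.inl he
      · right
        have hwy : w = y := hextra_head v w h he
        have h2 : Nat.card {u // N.E u y} = 2 := hyin2
        rcases card_two_mem h2 (hE'N _ _ hsY) hxy (Ne.symm hxsY) v (hwy ▸ h) with h' | h'
        · exfalso; apply he; rw [h', hwy]; exact hsY
        · exact ⟨h', hwy⟩
    · rintro (h | ⟨rfl, rfl⟩)
      · exact hE'N _ _ h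
      · exact hxy
  have hnyx : ¬ N.E y x := fun h => hNac x ((Relation.TransGen.single hxy).tail h)
  have hnxx : ¬ N.E x x := fun h => hNac x (Relation.TransGen.single h)
  have hnyy : ¬ N.E y y := fun h => hNac y (Relation.TransGen.single h)
  refine ⟨a, b, s, t, hOk, ?_⟩
  have hψbij : Function.Bijective (fun v : T.V ⊕ Bool => match v with
      | inl p => φ p
      | inr false => x
      | inr true => y) := by
    constructor
    · rintro (p | bf) (q | bf') h
      · simp only at h; rw [hinj h]
      · rcases bf' with _ | _ <;> simp only at h
        · exact absurd ⟨p, h⟩ hxR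
        · exact absurd ⟨p, h⟩ hyR
      · rcases bf with _ | _ <;> simp only at h
        · exact absurd ⟨q, h.symm⟩ hxR
        · exact absurd ⟨q, h.symm⟩ hyR
      · rcases bf with _ | _ <;> rcases bf' with _ | _ <;> simp only at h
        · rfl
        · exact absurd h hxy_ne
        · exact absurd h.symm hxy_ne
        · rfl
    · intro v
      by_cases hv : v ∈ Set.range φ
      · obtain ⟨p, rfl⟩ := hv
        exact ⟨inl p, rfl⟩
      · rcases hnonrange v hv with rfl | rfl
        · exact ⟨inr false, rfl⟩
        · exact ⟨inr true, rfl⟩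
  refine ⟨Equiv.ofBijective _ hψbij, ?_, ?_⟩
  · intro z w
    rcases z with p | bf
    · rcases w with q | bf'
      · show CfgE T a b s t (inl p) (inl q) ↔ N.E (φ p) (φ q)
        rw [cfgE_ll, hNiff]
        constructor
        · rintro ⟨hh1, hh2, hh3⟩
          left
          rw [hE'iff]
          exact Or.inl ⟨p, q, rfl, rfl, hh1, hh2, hh3⟩
        · rintro (h | ⟨hh1, -⟩)
          · rw [hE'iff] at h
            rcases h with ⟨p', q', e1, e2, hh1, hh2, hh3⟩ | ⟨e1, e2⟩ | ⟨e1, e2⟩ |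
              ⟨e1, e2⟩ | ⟨e1, e2⟩
            · obtain rfl := hinj e1
              obtain rfl := hinj e2
              exact ⟨hh1, hh2, hh3⟩
            · exact absurd ⟨q, e2⟩ hxR
            · exact absurd ⟨p, e1⟩ hxR
            · exact absurd ⟨q, e2⟩ hyR
            · exact absurd ⟨p, e1⟩ hyR
          · exact absurd ⟨p, hh1⟩ hxR
      · rcases bf' with _ | _
        · show CfgE T a b s t (inl p) (inr false) ↔ N.E (φ p) x
          rw [cfgE_lx, hNiff]
          constructor
          · intro h
            rw [h]
            exact Or.inl ((hE'iff _ _).mpr (Or.inr (Or.inl ⟨rfl, rfl⟩)))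
          · rintro (h | ⟨hh1, -⟩)
            · rw [hE'iff] at h
              rcases h with ⟨p', q', e1, e2, -, -, -⟩ | ⟨e1, e2⟩ | ⟨e1, e2⟩ |
                ⟨e1, e2⟩ | ⟨e1, e2⟩
              · exact absurd ⟨q', e2.symm⟩ hxR
              · exact hinj e1
              · exact absurd ⟨p, e1⟩ hxR
              · exact absurd e2 hxy_ne
              · exact absurd ⟨p, e1⟩ hyR
            · exact absurd ⟨p, hh1⟩ hxR
        · show CfgE T a b s t (inl p) (inr true) ↔ N.E (φ p) y
          rw [cfgE_ly, hNiff]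
          constructor
          · intro h
            rw [h]
            exact Or.inl ((hE'iff _ _).mpr (Or.inr (Or.inr (Or.inr (Or.inl ⟨rfl, rfl⟩)))))
          · rintro (h | ⟨hh1, -⟩)
            · rw [hE'iff] at h
              rcases h with ⟨p', q', e1, e2, -, -, -⟩ | ⟨e1, e2⟩ | ⟨e1, e2⟩ |
                ⟨e1, e2⟩ | ⟨e1, e2⟩
              · exact absurd ⟨q', e2.symm⟩ hyR
              · exact absurd e2.symm hxy_ne
              · exact absurd ⟨p, e1⟩ hxR
              · exact hinj e1
              · exact absurd ⟨p, e1⟩ hyR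
            · exact absurd ⟨p, hh1⟩ hxR
    · rcases bf with _ | _
      · rcases w with q | bf'
        · show CfgE T a b s t (inr false) (inl q) ↔ N.E x (φ q)
          rw [cfgE_xl, hNiff]
          constructor
          · intro h
            rw [h]
            exact Or.inl ((hE'iff _ _).mpr (Or.inr (Or.inr (Or.inl ⟨rfl, rfl⟩))))
          · rintro (h | ⟨-, hh2⟩)
            · rw [hE'iff] at h
              rcases h with ⟨p', q', e1, e2, -, -, -⟩ | ⟨e1, e2⟩ | ⟨e1, e2⟩ |
                ⟨e1, e2⟩ | ⟨e1, e2⟩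
              · exact absurd ⟨p', e1.symm⟩ hxR
              · exact absurd ⟨q, e2⟩ hxR
              · exact hinj e2
              · exact absurd ⟨q, e2⟩ hyR
              · exact absurd e1 hxy_ne
            · exact absurd ⟨q, hh2⟩ hyR
        · rcases bf' with _ | _
          · show CfgE T a b s t (inr false) (inr false) ↔ N.E x x
            rw [cfgE_xx]
            exact ⟨False.elim, fun h => hnxx h⟩
          · show CfgE T a b s t (inr false) (inr true) ↔ N.E x y
            rw [cfgE_xy]
            exact ⟨fun _ => hxy, fun _ => trivial⟩
      · rcases w with q | bf'
        · show CfgE T a b s t (inr true) (inl q) ↔ N.E y (φ q)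
          rw [cfgE_yl, hNiff]
          constructor
          · intro h
            rw [h]
            exact Or.inl ((hE'iff _ _).mpr (Or.inr (Or.inr (Or.inr (Or.inr ⟨rfl, rfl⟩)))))
          · rintro (h | ⟨hh1, -⟩)
            · rw [hE'iff] at h
              rcases h with ⟨p', q', e1, e2, -, -, -⟩ | ⟨e1, e2⟩ | ⟨e1, e2⟩ |
                ⟨e1, e2⟩ | ⟨e1, e2⟩
              · exact absurd ⟨p', e1.symm⟩ hyR
              · exact absurd ⟨a, e1.symm⟩ hyR
              · exact absurd e1.symm hxy_ne
              · exact absurd ⟨s, e1.symm⟩ hyR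
              · exact hinj e2
            · exact absurd hh1.symm hxy_ne
        · rcases bf' with _ | _
          · show CfgE T a b s t (inr true) (inr false) ↔ N.E y x
            rw [cfgE_yx]
            exact ⟨False.elim, fun h => hnyx h⟩
          · show CfgE T a b s t (inr true) (inr true) ↔ N.E y y
            rw [cfgE_yy]
            exact ⟨False.elim, fun h => hnyy h⟩
  · intro z
    show φ (T.lab z) = N.lab z
    exact hlab z

end Structure

/-- tier-1 networks on the same leaf set with a common embedded tree are
connected by a finite sequence of head moves. -/
theorem tier1_common_tree_connected {X : Type} (N N' T : Net X)
    (hN : N.valid) (hN' : N'.valid)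
    (h1 : reticCount N.E = 1) (h1' : reticCount N'.E = 1)
    (hT : EmbeddedTree T N) (hT' : EmbeddedTree T N') :
    ConnectedBy HeadMoveStep N N' := by
  obtain ⟨a, b, s, t, hok, hiso⟩ := structure_thm hN h1 hT
  obtain ⟨a', b', s', t', hok', hiso'⟩ := structure_thm hN' h1' hT'
  have htree : IsTree T := hT.1
  refine Relation.ReflTransGen.trans
    (Relation.ReflTransGen.single (Or.inr (netIso_symm hiso))) ?_
  refine Relation.ReflTransGen.trans
    (conn_tails htree (aCount T.E a + aCount T.E a') a b s t a' b' s' t'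
      le_rfl hok hok') ?_
  exact Relation.ReflTransGen.single (Or.inr hiso')

end Phylo
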